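/- arXiv:2208.13989 — 3 statements merged into one kernel-verified Lean document; each statement's English description precedes it below -/
import Mathlib

section
/- For every natural number n, every α > 0 and every b ∈ ℝ: ∫₀^∞ xⁿ e^{−α x} cos(b x) dx = n! · cos( (n+1) · arctan(b/α) ) / (α² + b²)^{(n+1)/2}. -/
open MeasureTheory Real Nat Filter

lemma aux_integrable (n : ℕ) {z : ℂ} (hz : 0 < z.re) :
    IntegrableOn (fun x : ℝ => (x : ℂ) ^ n * Complex.exp (-z * x)) (Set.Ioi 0) := by
  have hR : IntegrableOn (fun x : ℝ => x ^ (n : ℝ) * Real.exp (-z.re * x)) (Set.Ioi 0) := by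
    have := integrableOn_rpow_mul_exp_neg_mul_rpow (p := 1) (s := (n : ℝ)) (b := z.re)
      (lt_of_lt_of_le neg_one_lt_zero (Nat.cast_nonneg n)) one_pos hz
    simpa using this
  refine (hR.mono' ?_ ?_)
  · apply Measurable.aestronglyMeasurable
    fun_prop
  · filter_upwards [ae_restrict_mem measurableSet_Ioi] with x hx
    have hx0 : (0:ℝ) < x := hx
    rw [norm_mul, norm_pow, Complex.norm_exp]
    rw [Complex.norm_real, Real.norm_eq_abs, abs_of_pos hx0, Real.rpow_natCast]
    have h2 : (-z * (x:ℂ)).re = -z.re * x := by simp [Complex.neg_re, Complex.mul_re]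
    rw [h2]

lemma aux_tendsto (n : ℕ) {z : ℂ} (hz : 0 < z.re) :
    Tendsto (fun x : ℝ => (x : ℂ) ^ n * Complex.exp (-z * x)) atTop (nhds 0) := by
  rw [tendsto_zero_iff_norm_tendsto_zero]
  have h := tendsto_rpow_mul_exp_neg_mul_atTop_nhds_zero (n : ℝ) z.re hz
  refine h.congr' ?_
  filter_upwards [eventually_gt_atTop (0:ℝ)] with x hx
  rw [norm_mul, norm_pow, Complex.norm_exp,
    Complex.norm_real, Real.norm_eq_abs, abs_of_pos hx, Real.rpow_natCast]
  have h2 : (-z * (x:ℂ)).re = -z.re * x := by simp [Complex.neg_re, Complex.mul_re]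
  rw [h2]

lemma aux_key (n : ℕ) {z : ℂ} (hz : 0 < z.re) :
    (∫ x in Set.Ioi (0:ℝ), (x : ℂ) ^ n * Complex.exp (-z * x)) = (n ! : ℂ) / z ^ (n + 1) := by
  have hz0 : z ≠ 0 := fun h => by simp [h] at hz
  induction n with
  | zero =>
    have hderiv : ∀ x ∈ Set.Ici (0:ℝ),
        HasDerivAt (fun x : ℝ => -Complex.exp (-z * x) / z)
          ((x:ℂ) ^ 0 * Complex.exp (-z * x)) x := by
      intro x _
      have h1 : HasDerivAt (fun x : ℝ => Complex.exp (-z * x)) (-z * Complex.exp (-z * x)) x := by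
        have hlin : HasDerivAt (fun x : ℝ => -z * (x:ℂ)) (-z) x := by
          simpa using ((hasDerivAt_id x).ofReal_comp.const_mul (-z))
        simpa [mul_comm] using hlin.cexp
      have := (h1.neg.div_const z)
      convert this using 1
      · rfl
      · rfl
      field_simp
    have htend : Tendsto (fun x : ℝ => -Complex.exp (-z * x) / z) atTop (nhds 0) := by
      have h2 := (aux_tendsto 0 hz)
      simp only [pow_zero, one_mul] at h2
      simpa using (h2.neg).div_const z
    have := integral_Ioi_of_hasDerivAt_of_tendsto' hderiv (aux_integrable 0 hz) htend
    rw [this]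
    simp [Nat.factorial, hz0]
    ring
  | succ n ih =>
    have hderiv : ∀ x ∈ Set.Ici (0:ℝ),
        HasDerivAt (fun x : ℝ => (x:ℂ) ^ (n+1) * Complex.exp (-z * x))
          (((n:ℂ)+1) * (x:ℂ) ^ n * Complex.exp (-z * x)
            - z * ((x:ℂ) ^ (n+1) * Complex.exp (-z * x))) x := by
      intro x _
      have hp : HasDerivAt (fun x : ℝ => (x:ℂ) ^ (n+1)) (((n:ℂ)+1) * (x:ℂ) ^ n) x := by
        have := (hasDerivAt_pow (n+1) (x:ℂ)).comp_ofReal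
        simpa [mul_comm, mul_assoc] using this
      have h1 : HasDerivAt (fun x : ℝ => Complex.exp (-z * x)) (-z * Complex.exp (-z * x)) x := by
        have hlin : HasDerivAt (fun x : ℝ => -z * (x:ℂ)) (-z) x := by
          simpa using ((hasDerivAt_id x).ofReal_comp.const_mul (-z))
        simpa [mul_comm] using hlin.cexp
      have := hp.mul h1
      convert this using 1
      · rfl
      · rfl
      ring
    have hint : IntegrableOn (fun x : ℝ =>
        ((n:ℂ)+1) * (x:ℂ) ^ n * Complex.exp (-z * x)
          - z * ((x:ℂ) ^ (n+1) * Complex.exp (-z * x))) (Set.Ioi 0) := by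
      refine Integrable.sub ?_ ?_
      · simpa [mul_assoc] using (aux_integrable n hz).const_mul ((n:ℂ)+1)
      · exact (aux_integrable (n+1) hz).const_mul z
    have heq := integral_Ioi_of_hasDerivAt_of_tendsto' hderiv hint (aux_tendsto (n+1) hz)
    rw [integral_sub (by simpa [mul_assoc] using (aux_integrable n hz).const_mul ((n:ℂ)+1))
      ((aux_integrable (n+1) hz).const_mul z)] at heq
    simp only [mul_assoc, integral_const_mul, Complex.ofReal_zero] at heq
    rw [ih] at heq
    rw [show ((0:ℂ)) ^ (n+1) * Complex.exp (-z * 0) = 0 by simp, sub_zero] at heq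
    rw [sub_eq_zero] at heq
    have h3 : (∫ x in Set.Ioi (0:ℝ), (x:ℂ) ^ (n+1) * Complex.exp (-z * x)) * z ^ (n+1+1)
        = z ^ (n+1) * (z * ∫ x in Set.Ioi (0:ℝ), (x:ℂ) ^ (n+1) * Complex.exp (-z * x)) := by
      ring
    rw [eq_div_iff (pow_ne_zero _ hz0), h3, ← heq, Nat.factorial_succ]
    push_cast
    field_simp

/-- the tabulated Fourier cosine transform
`∫₀^∞ xⁿ e^{−αx} cos(bx) dx = n! cos((n+1) arctan(b/α)) / (α² + b²)^{(n+1)/2}`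
for `α > 0`, `b ∈ ℝ`, `n ∈ ℕ`. -/
theorem integral_pow_mul_exp_neg_mul_cos (n : ℕ) (α b : ℝ) (hα : 0 < α) :
    (∫ x in Set.Ioi (0 : ℝ), x ^ n * Real.exp (-α * x) * Real.cos (b * x))
      = (n ! : ℝ) * Real.cos (((n : ℝ) + 1) * Real.arctan (b / α))
          / (α ^ 2 + b ^ 2) ^ (((n : ℝ) + 1) / 2) := by
  set z : ℂ := (α : ℂ) - b * Complex.I with hzdef
  set w : ℂ := (α : ℂ) + b * Complex.I with hwdef
  have hzre : z.re = α := by simp [hzdef]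
  have hzim : z.im = -b := by simp [hzdef]
  have hwre : w.re = α := by simp [hwdef]
  have hwim : w.im = b := by simp [hwdef]
  have hz : 0 < z.re := by rw [hzre]; exact hα
  have hw0 : w ≠ 0 := fun h => by rw [h] at hwre; simp at hwre; exact hα.ne' hwre.symm
  set S : ℝ := α ^ 2 + b ^ 2 with hSdef
  have hS : 0 < S := by positivity
  -- step 1 : express the real integral as the real part of the complex one
  have step1 : (∫ x in Set.Ioi (0 : ℝ), x ^ n * Real.exp (-α * x) * Real.cos (b * x))
      = ((n ! : ℂ) / z ^ (n + 1)).re := by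
    have hir := integral_re (aux_integrable n hz)
    simp only [RCLike.re_to_complex] at hir
    rw [← aux_key n hz, ← hir]
    refine setIntegral_congr_fun measurableSet_Ioi (fun x hx => ?_)
    have hre : (-z * x).re = -α * x := by simp [Complex.neg_re, Complex.mul_re, hzre, hzim]
    have him : (-z * x).im = b * x := by simp [Complex.neg_im, Complex.mul_im, hzre, hzim]
    rw [show ((x : ℂ) ^ n) = ((x ^ n : ℝ) : ℂ) by push_cast; ring,
      Complex.re_ofReal_mul, Complex.exp_re, hre, him, mul_assoc]
  rw [step1]
  -- the argument of w
  have harg : Complex.arg w = Real.arctan (b / α) := by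
    have ht : Real.tan (Complex.arg w) = b / α := by rw [Complex.tan_arg, hwim, hwre]
    have hlt : |Complex.arg w| < π / 2 := by
      rw [Complex.abs_arg_lt_pi_div_two_iff]
      left; rw [hwre]; exact hα
    rw [← ht, Real.arctan_tan (neg_lt_of_abs_lt hlt) (lt_of_abs_lt hlt)]
  have habs : ‖w‖ = Real.sqrt S := by
    rw [Complex.norm_def]
    congr 1
    rw [Complex.normSq_apply, hwre, hwim]; ring
  -- rewrite the complex quotient
  have hzw : z * w = (S : ℂ) := by
    rw [hzdef, hwdef, hSdef]
    push_cast
    linear_combination (-(b:ℂ)^2) * Complex.I_sq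
  have hq : (n ! : ℂ) / z ^ (n + 1) = (n ! : ℂ) * w ^ (n + 1) / ((S : ℝ) : ℂ) ^ (n + 1) := by
    have hz0 : z ≠ 0 := fun h => by simp [h] at hz
    rw [div_eq_div_iff (pow_ne_zero _ hz0) (pow_ne_zero _ (by exact_mod_cast hS.ne'))]
    have h5 : z ^ (n+1) * w ^ (n+1) = ((S : ℝ) : ℂ) ^ (n+1) := by rw [← mul_pow, hzw]
    rw [mul_assoc, mul_comm (w ^ (n+1)), h5]
  rw [hq]
  -- compute w ^ (n+1) in polar form
  have hw_polar : w = (Real.sqrt S : ℂ) * Complex.exp (Real.arctan (b / α) * Complex.I) := by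
    rw [← harg, ← habs, Complex.norm_mul_exp_arg_mul_I]
  have hwpow : (w ^ (n + 1)).re
      = Real.sqrt S ^ (n + 1) * Real.cos (((n : ℝ) + 1) * Real.arctan (b / α)) := by
    rw [hw_polar, mul_pow, ← Complex.exp_nat_mul,
      show (((n + 1 : ℕ)) : ℂ) * ((Real.arctan (b / α) : ℝ) * Complex.I)
        = ((((n : ℝ) + 1) * Real.arctan (b / α) : ℝ) : ℂ) * Complex.I by push_cast; ring,
      show ((Real.sqrt S : ℂ)) ^ (n + 1) = ((Real.sqrt S ^ (n + 1) : ℝ) : ℂ) by push_cast; ring,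
      Complex.re_ofReal_mul, Complex.exp_ofReal_mul_I_re]
  -- take real parts
  have hre2 : ((n ! : ℂ) * w ^ (n + 1) / ((S : ℝ) : ℂ) ^ (n + 1)).re
      = (n ! : ℝ) * (w ^ (n + 1)).re / S ^ (n + 1) := by
    rw [show (((S : ℝ)) : ℂ) ^ (n + 1) = ((S ^ (n + 1) : ℝ) : ℂ) by push_cast; ring,
      Complex.div_ofReal_re,
      show ((n ! : ℕ) : ℂ) = (((n ! : ℕ) : ℝ) : ℂ) by push_cast; ring,
      Complex.re_ofReal_mul]
  rw [hre2, hwpow]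
  -- final real computation with rpow
  have hsqrt : Real.sqrt S ^ (n + 1) = S ^ (((n : ℝ) + 1) / 2) := by
    rw [Real.sqrt_eq_rpow, ← Real.rpow_natCast (S ^ ((1:ℝ)/2)) (n+1), ← Real.rpow_mul hS.le]
    congr 1
    push_cast
    ring
  have hpow : S ^ (n + 1) = S ^ (((n : ℝ) + 1) / 2) * S ^ (((n : ℝ) + 1) / 2) := by
    rw [← Real.rpow_add hS, ← Real.rpow_natCast S (n+1)]
    congr 1
    push_cast
    ring
  rw [hsqrt, hpow]
  have hne : S ^ (((n : ℝ) + 1) / 2) ≠ 0 := (Real.rpow_pos_of_pos hS _).ne'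
  field_simp
end

section
/- Fix integers N ≥ 1 and 0 ≤ ℓ ≤ N−1 and a real β > 0. Let R_{Nℓ}(ρ) = e^{−ρ/2} ρ^ℓ · Σ_{t=0}^{N−ℓ−1} (−1)^t · binom(N+ℓ, N−ℓ−1−t) · ρ^t / t! . Then for every p ∈ ℝ, with θ = arctan(p/β), the radial momentum-space wave function ψ_{Nℓ}(p) = ∫₀^∞ e^{i p r} R_{Nℓ}(2β r) r dr is given by the finite trigonometric expansion ψ_{Nℓ}(p) = Σ_{t=0}^{N−ℓ−1} b_t · e^{i(ℓ+t+2)θ} · (cos θ)^{ℓ+t+2}, where b_t = (−1)^t · binom(N+ℓ, N−ℓ−1−t) · (ℓ+t+1)! · 2^{ℓ+t+2} / ( t! · (2β)² ). -/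
open MeasureTheory Complex Real Nat

lemma aux_intgOn (a : ℂ) (ha : 0 < a.re) (n : ℕ) :
    MeasureTheory.IntegrableOn (fun x : ℝ => (x : ℂ) ^ n * Complex.exp (-(a * x)))
      (Set.Ioi (0:ℝ)) := by
  have hg : MeasureTheory.IntegrableOn
      (fun x : ℝ => x ^ (n:ℝ) * Real.exp (-a.re * x ^ (1:ℝ))) (Set.Ioi (0:ℝ)) :=
    integrableOn_rpow_mul_exp_neg_mul_rpow
      (lt_of_lt_of_le (by norm_num) (Nat.cast_nonneg n)) one_pos ha
  refine MeasureTheory.Integrable.mono' hg ?_ ?_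
  · exact (Continuous.aestronglyMeasurable (by continuity))
  · filter_upwards [MeasureTheory.ae_restrict_mem measurableSet_Ioi] with x hx
    have hx0 : (0:ℝ) < x := hx
    have h2 : (-(a * x)).re = -a.re * x := by simp [Complex.mul_re]
    simp only [norm_mul, norm_pow, Complex.norm_real, Complex.norm_exp, h2,
      Real.norm_eq_abs, abs_of_pos hx0, Real.rpow_natCast, Real.rpow_one, le_refl]

lemma aux_hd (a : ℂ) (x : ℝ) :
    HasDerivAt (fun x : ℝ => Complex.exp (-(a * x))) (-a * Complex.exp (-(a * x))) x := by
  have h1 : HasDerivAt (fun z : ℂ => Complex.exp (-(a * z))) (-a * Complex.exp (-(a*x))) (x:ℂ) := by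
    have h2 := (((hasDerivAt_id ((x:ℝ):ℂ)).const_mul a).neg).cexp
    simpa [mul_comm] using h2
  exact h1.comp_ofReal

lemma aux_tendsto_s11 (a : ℂ) (ha : 0 < a.re) (n : ℕ) (c : ℂ) :
    Filter.Tendsto (fun x : ℝ => (x:ℂ)^n * (Complex.exp (-(a * x)) * c)) Filter.atTop (nhds 0) := by
  have h' : Filter.Tendsto (fun x : ℝ => x ^ (n:ℝ) * Real.exp (-a.re * x) * ‖c‖)
      Filter.atTop (nhds 0) := by
    have := (tendsto_rpow_mul_exp_neg_mul_atTop_nhds_zero (n:ℝ) a.re ha).mul_const ‖c‖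
    simpa using this
  refine squeeze_zero_norm' ?_ h'
  filter_upwards [Filter.eventually_ge_atTop (0:ℝ)] with x hx
  have h2 : (-(a * x)).re = -a.re * x := by simp [Complex.mul_re]
  simp only [norm_mul, norm_pow, Complex.norm_real, Complex.norm_exp, h2,
    Real.norm_eq_abs, _root_.abs_of_nonneg hx, Real.rpow_natCast, mul_assoc, le_refl]

lemma aux_integral (a : ℂ) (ha : 0 < a.re) : ∀ n : ℕ,
    (∫ x in Set.Ioi (0:ℝ), (x : ℂ) ^ n * Complex.exp (-(a * x))) = (n ! : ℂ) / a ^ (n+1) := by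
  have ha0 : a ≠ 0 := fun h => by simp [h] at ha
  intro n
  induction n with
  | zero =>
    have hd : ∀ x ∈ Set.Ici (0:ℝ), HasDerivAt (fun x : ℝ => -Complex.exp (-(a * x)) / a)
        ((x:ℂ)^0 * Complex.exp (-(a * x))) x := by
      intro x _
      have := ((aux_hd a x).neg).div_const a
      refine this.congr_deriv ?_
      field_simp
    have hint := aux_intgOn a ha 0
    have htd : Filter.Tendsto (fun x : ℝ => -Complex.exp (-(a * x)) / a)
        Filter.atTop (nhds 0) := by
      have := aux_tendsto_s11 a ha 0 (-1/a)
      simpa [div_eq_mul_inv, mul_comm, neg_div] using this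
    have := integral_Ioi_of_hasDerivAt_of_tendsto' hd hint htd
    rw [this]
    simp [neg_div, one_div]
  | succ n ih =>
    set f' : ℝ → ℂ := fun x => (-((n:ℂ)+1)/a) * ((x:ℂ)^n * Complex.exp (-(a*x)))
      + (x:ℂ)^(n+1) * Complex.exp (-(a*x)) with hf'
    have hd : ∀ x ∈ Set.Ici (0:ℝ), HasDerivAt
        (fun x : ℝ => (x:ℂ)^(n+1) * (-Complex.exp (-(a * x)) / a)) (f' x) x := by
      intro x _
      have hp : HasDerivAt (fun x : ℝ => (x:ℂ)^(n+1)) ((n+1) * (x:ℂ)^n) x := by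
        have := (hasDerivAt_pow (n+1) ((x:ℝ):ℂ)).comp_ofReal
        simpa using this
      have he := ((aux_hd a x).neg).div_const a
      have := hp.mul he
      refine this.congr_deriv ?_
      rw [hf']
      simp only [Pi.neg_apply]
      field_simp
    have hint : MeasureTheory.IntegrableOn f' (Set.Ioi (0:ℝ)) :=
      ((aux_intgOn a ha n).const_mul _).add (aux_intgOn a ha (n+1))
    have htd : Filter.Tendsto (fun x : ℝ => (x:ℂ)^(n+1) * (-Complex.exp (-(a * x)) / a))
        Filter.atTop (nhds 0) := by
      have := aux_tendsto_s11 a ha (n+1) (-1/a)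
      simpa [div_eq_mul_inv, mul_comm, neg_div, mul_assoc] using this
    have h0 := integral_Ioi_of_hasDerivAt_of_tendsto' hd hint htd
    simp only [Complex.ofReal_zero, zero_pow (Nat.succ_ne_zero n), zero_mul, sub_zero] at h0
    rw [hf'] at h0
    rw [MeasureTheory.integral_add ((aux_intgOn a ha n).const_mul _) (aux_intgOn a ha (n+1)),
      MeasureTheory.integral_const_mul, ih] at h0
    have h1 : (∫ x in Set.Ioi (0:ℝ), (x:ℂ)^(n+1) * Complex.exp (-(a*x)))
        = ((n:ℂ)+1)/a * ((n ! : ℂ) / a ^ (n+1)) := by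
      have := h0.symm
      linear_combination -this
    rw [h1]
    have hfac : (((n+1)! : ℕ) : ℂ) = ((n:ℂ)+1) * (n ! : ℂ) := by
      push_cast [Nat.factorial_succ]
      ring
    rw [hfac]
    rw [pow_succ _ (n+1)]
    field_simp
  


/-- trigonometric closed form of the radial momentum-space hydrogen wave
functions. With `R_{Nℓ}(ρ) = e^{−ρ/2} ρ^ℓ Σ_t (−1)^t C(N+ℓ, N−ℓ−1−t) ρ^t/t!` and
`θ = arctan(p/β)`, the transform `ψ_{Nℓ}(p) = ∫₀^∞ e^{ipr} R_{Nℓ}(2βr) r dr` equals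
`Σ_t b_t e^{i(ℓ+t+2)θ} cos^{ℓ+t+2} θ` where
`b_t = (−1)^t C(N+ℓ, N−ℓ−1−t) (ℓ+t+1)! 2^{ℓ+t+2} / (t! (2β)²)`. -/
theorem hydrogen_radial_momentum_wavefunction_trigonometric
    (N ℓ : ℕ) (hN : 1 ≤ N) (hℓ : ℓ + 1 ≤ N) (β : ℝ) (hβ : 0 < β)
    (R : ℝ → ℝ)
    (hR : ∀ ρ : ℝ, R ρ = Real.exp (-ρ / 2) * ρ ^ ℓ *
      ∑ t ∈ Finset.range (N - ℓ),
        (-1 : ℝ) ^ t * ((N + ℓ).choose (N - ℓ - 1 - t) : ℝ) * ρ ^ t / (t ! : ℝ))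
    (p : ℝ) (θ : ℝ) (hθ : θ = Real.arctan (p / β)) :
    (∫ r in Set.Ioi (0 : ℝ),
        Complex.exp (Complex.I * p * r) * ((R (2 * β * r) : ℝ) : ℂ) * (r : ℂ))
      = ∑ t ∈ Finset.range (N - ℓ),
          ((((-1 : ℝ) ^ t * ((N + ℓ).choose (N - ℓ - 1 - t) : ℝ) * ((ℓ + t + 1)! : ℝ)
              * 2 ^ (ℓ + t + 2) / ((t ! : ℝ) * (2 * β) ^ 2) : ℝ)) : ℂ)
            * Complex.exp (Complex.I * (((ℓ : ℝ) + t + 2 : ℝ) : ℂ) * (θ : ℂ))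
            * ((Real.cos θ : ℝ) : ℂ) ^ (ℓ + t + 2) := by
  set a : ℂ := (β : ℂ) - Complex.I * p with ha_def
  have ha : 0 < a.re := by simp [ha_def, Complex.sub_re, Complex.mul_re]; exact hβ
  have ha0 : a ≠ 0 := fun h => by simp [h] at ha
  -- pointwise rewriting of the integrand
  have key : ∀ r : ℝ, Complex.exp (Complex.I * p * r) * ((R (2 * β * r) : ℝ) : ℂ) * (r : ℂ)
      = ∑ t ∈ Finset.range (N - ℓ),
        (((-1 : ℝ) ^ t * ((N + ℓ).choose (N - ℓ - 1 - t) : ℝ) * (2*β) ^ (ℓ+t) / (t ! : ℝ) : ℝ) : ℂ)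
          * ((r:ℂ) ^ (ℓ + t + 1) * Complex.exp (-(a * r))) := by
    intro r
    rw [hR]
    have hmerge : Complex.exp (Complex.I * p * r) * Complex.exp (-(2 * (β:ℂ) * r) / 2)
        = Complex.exp (-(a*r)) := by
      rw [← Complex.exp_add]
      congr 1
      rw [ha_def]
      ring
    push_cast
    simp only [Finset.mul_sum, Finset.sum_mul]
    refine Finset.sum_congr rfl fun t ht => ?_
    linear_combination ((2 * (β:ℂ) * r) ^ ℓ *
      ((-1:ℂ) ^ t * ((N + ℓ).choose (N - ℓ - 1 - t) : ℂ) * (2*(β:ℂ)*r) ^ t / (t ! : ℂ)) * r) * hmerge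
  simp only [key]
  rw [MeasureTheory.integral_finset_sum _
    (fun t _ => ((aux_intgOn a ha (ℓ+t+1)).const_mul _))]
  refine Finset.sum_congr rfl fun t ht => ?_
  rw [MeasureTheory.integral_const_mul, aux_integral a ha (ℓ+t+1)]
  -- trig identity
  have hcos : Real.cos θ = 1 / Real.sqrt (1 + (p/β)^2) := by
    rw [hθ, Real.cos_arctan]
  have hsin : Real.sin θ = (p/β) / Real.sqrt (1 + (p/β)^2) := by
    rw [hθ, Real.sin_arctan]
  have hq : Real.sqrt (1 + (p/β)^2) ^ 2 = 1 + (p/β)^2 :=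
    Real.sq_sqrt (by positivity)
  have hqne : Real.sqrt (1 + (p/β)^2) ≠ 0 := by positivity
  have hkey : Complex.exp (Complex.I * θ) * ((Real.cos θ : ℝ) : ℂ) = (β : ℂ) / a := by
    rw [mul_comm Complex.I, Complex.exp_mul_I, ← Complex.ofReal_cos, ← Complex.ofReal_sin,
      eq_div_iff ha0, ha_def]
    have hts : Real.sin θ * β = Real.cos θ * p := by
      rw [hθ, Real.sin_arctan, Real.cos_arctan]
      field_simp
    have hpy : Real.sin θ ^ 2 + Real.cos θ ^ 2 = 1 := Real.sin_sq_add_cos_sq θ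
    have htsC := congrArg (fun x : ℝ => (x:ℂ)) hts
    have hpyC := congrArg (fun x : ℝ => (x:ℂ)) hpy
    push_cast [-Complex.ofReal_sin, -Complex.ofReal_cos] at htsC hpyC
    linear_combination (Complex.I * (Real.cos θ : ℂ) - (Real.sin θ : ℂ)) * htsC
      + (β:ℂ) * hpyC + (-(Real.sin θ : ℂ) * (Real.cos θ : ℂ) * (p:ℂ)) * Complex.I_sq
  have hexpk : Complex.exp (Complex.I * (((ℓ : ℝ) + t + 2 : ℝ) : ℂ) * (θ : ℂ))
      = Complex.exp (Complex.I * θ) ^ (ℓ + t + 2) := by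
    rw [← Complex.exp_nat_mul]
    congr 1
    push_cast
    ring
  rw [hexpk]
  have hpow : Complex.exp (Complex.I*(θ:ℂ))^(ℓ+t+2) * ((Real.cos θ :ℝ):ℂ)^(ℓ+t+2)
      = ((β:ℂ))^(ℓ+t+2)/a^(ℓ+t+2) := by
    rw [← mul_pow, hkey, div_pow]
  have hreal : ((-1 : ℝ) ^ t * ((N + ℓ).choose (N - ℓ - 1 - t) : ℝ) * ((ℓ + t + 1)! : ℝ)
      * 2 ^ (ℓ + t + 2) / ((t ! : ℝ) * (2 * β) ^ 2)) * β ^ (ℓ + t + 2)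
      = ((-1 : ℝ) ^ t * ((N + ℓ).choose (N - ℓ - 1 - t) : ℝ) * (2*β) ^ (ℓ+t) / (t ! : ℝ))
        * ((ℓ + t + 1)! : ℝ) := by
    have ht0 : (t ! : ℝ) ≠ 0 := Nat.cast_ne_zero.mpr t.factorial_ne_zero
    field_simp
    ring
  have hC' := congrArg (fun x : ℝ => (x:ℂ)) hreal
  push_cast at hC'
  push_cast [-Complex.ofReal_cos]
  linear_combination (-hC') / a ^ (ℓ + t + 2)
    - ((-1:ℂ)^t * ((N+ℓ).choose (N-ℓ-1-t) : ℂ) * (((ℓ+t+1)! : ℕ) : ℂ) * 2^(ℓ+t+2)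
        / (((t ! : ℕ) : ℂ) * (2*(β:ℂ))^2)) * hpow
end

section
/- Fix p ∈ ℝ and define ψ : (0,π) → ℂ by ψ(θ) = (1/ sin θ) · e^{ −i p · log( tan(θ/2) ) }. Then ψ is an eigenfunction of the geometric z-momentum operator on the unit sphere: for every θ ∈ (0,π), i · sin θ · ( ψ'(θ) + (cos θ / sin θ) · ψ(θ) ) = p · ψ(θ). -/
open Real Complex

/-- the function `ψ(θ) = (1/sin θ) e^{−ip log(tan(θ/2))}` is an eigenfunction
of the geometric z-momentum operator `p̂_z = i sin θ (d/dθ + cot θ)` on the unit sphere: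
`i sin θ (ψ'(θ) + (cos θ/sin θ) ψ(θ)) = p ψ(θ)` for all `θ ∈ (0,π)`. -/
theorem geometric_momentum_z_eigenfunction
    (p : ℝ) (ψ : ℝ → ℂ)
    (hψ : ∀ θ : ℝ, ψ θ = (1 / (Real.sin θ : ℂ)) *
      Complex.exp (-Complex.I * p * (Real.log (Real.tan (θ / 2)) : ℂ)))
    (θ : ℝ) (hθ : θ ∈ Set.Ioo (0 : ℝ) Real.pi) :
    Complex.I * (Real.sin θ : ℂ) *
        (deriv ψ θ + ((Real.cos θ : ℂ) / (Real.sin θ : ℂ)) * ψ θ)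
      = (p : ℂ) * ψ θ := by
  obtain ⟨hθ0, hθπ⟩ := hθ
  have hψ' : ψ = fun x => (1 / (Real.sin x : ℂ)) *
      Complex.exp (-Complex.I * p * (Real.log (Real.tan (x / 2)) : ℂ)) := funext hψ
  subst hψ'
  have hspos : 0 < Real.sin θ := Real.sin_pos_of_pos_of_lt_pi hθ0 hθπ
  have hs : Real.sin θ ≠ 0 := ne_of_gt hspos
  have hsC : (Real.sin θ : ℂ) ≠ 0 := by exact_mod_cast hs
  have hcpos : 0 < Real.cos (θ / 2) := Real.cos_pos_of_mem_Ioo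
    ⟨by linarith [Real.pi_pos], by linarith⟩
  have hc2 : Real.cos (θ / 2) ≠ 0 := ne_of_gt hcpos
  have hspos2 : 0 < Real.sin (θ / 2) := Real.sin_pos_of_pos_of_lt_pi
    (by linarith) (by linarith [Real.pi_pos])
  have ht : Real.tan (θ / 2) ≠ 0 := by
    rw [Real.tan_eq_sin_div_cos]
    positivity
  have hsin2 : Real.sin θ = 2 * Real.sin (θ / 2) * Real.cos (θ / 2) := by
    have := Real.sin_two_mul (θ / 2)
    rw [show 2 * (θ / 2) = θ by ring] at this
    linarith
  -- derivative of log (tan (θ/2))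
  have hf : HasDerivAt (fun x : ℝ => Real.log (Real.tan (x / 2))) (1 / Real.sin θ) θ := by
    have h1 : HasDerivAt (fun x : ℝ => x / 2) (1 / 2) θ := (hasDerivAt_id θ).div_const 2
    have h2 : HasDerivAt Real.tan (1 / Real.cos (θ / 2) ^ 2) (θ / 2) := Real.hasDerivAt_tan hc2
    have h3 := h2.comp θ h1
    have h4 := (Real.hasDerivAt_log ht).comp θ h3
    refine h4.congr_deriv ?_
    rw [Real.tan_eq_sin_div_cos, hsin2]
    field_simp
  -- derivative of the exponential factor
  set E : ℂ := Complex.exp (-Complex.I * p * (Real.log (Real.tan (θ / 2)) : ℂ)) with hE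
  have hg : HasDerivAt (fun x : ℝ =>
      Complex.exp (-Complex.I * p * (Real.log (Real.tan (x / 2)) : ℂ)))
      (E * (-Complex.I * p * (1 / Real.sin θ : ℝ))) θ := by
    have := ((hf.ofReal_comp).const_mul (-Complex.I * p)).cexp
    simpa [hE, mul_comm, mul_assoc, mul_left_comm] using this
  -- derivative of 1/sin
  have hinv : HasDerivAt (fun x : ℝ => 1 / (Real.sin x : ℂ))
      (-(Real.cos θ : ℂ) / (Real.sin θ : ℂ) ^ 2) θ := by
    have hsd : HasDerivAt (fun x : ℝ => (Real.sin x : ℂ)) (Real.cos θ : ℂ) θ :=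
      (Real.hasDerivAt_sin θ).ofReal_comp
    have h2 := (hasDerivAt_inv hsC).comp θ hsd
    simp only [one_div]
    refine h2.congr_deriv ?_
    field_simp
  have hder : HasDerivAt (fun x : ℝ => (1 / (Real.sin x : ℂ)) *
      Complex.exp (-Complex.I * p * (Real.log (Real.tan (x / 2)) : ℂ)))
      ((-(Real.cos θ : ℂ) / (Real.sin θ : ℂ) ^ 2) * E
        + (1 / (Real.sin θ : ℂ)) * (E * (-Complex.I * p * (1 / Real.sin θ : ℝ)))) θ :=
    hinv.mul hg
  rw [hder.deriv]
  set S : ℂ := (Real.sin θ : ℂ) with hS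
  set C : ℂ := (Real.cos θ : ℂ) with hC
  show Complex.I * S *
      ((-C / S ^ 2 * E + 1 / S * (E * (-Complex.I * p * ((1 / Real.sin θ : ℝ) : ℂ))))
        + C / S * (1 / S * E)) = p * (1 / S * E)
  have hcast : ((1 / Real.sin θ : ℝ) : ℂ) = 1 / S := by rw [hS]; push_cast; ring
  rw [hcast]
  have hII : Complex.I * -Complex.I = 1 := by
    rw [mul_neg, Complex.I_mul_I, neg_neg]
  have key : Complex.I * S *
      ((-C / S ^ 2 * E + 1 / S * (E * (-Complex.I * p * (1 / S))))
        + C / S * (1 / S * E)) = (Complex.I * -Complex.I) * (p * (1 / S * E)) := by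
    field_simp
    ring_nf
  rw [key, hII, one_mul]
end
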